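/- The Grandi series ∑_{k=0}^{∞} (−1)^k is χ-summable with χ-sum equal to 1/2, i.e., lim_{n→∞} ∑_{k=0}^{n} χ_n(k)·(−1)^k = 1/2. -/

import Mathlib

noncomputable def chi (n k : ℕ) : ℝ := ∏ j ∈ Finset.range k, (1 - (j : ℝ) / n)

open Finset Filter

lemma chi_zero (n : ℕ) : chi n 0 = 1 := by simp [chi]

lemma chi_succ (n k : ℕ) : chi n (k + 1) = chi n k * (1 - (k : ℝ) / n) := by
  simp [chi, Finset.prod_range_succ]

lemma chi_nonneg {n k : ℕ} (hk : k ≤ n + 1) : 0 ≤ chi n k := by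
  apply Finset.prod_nonneg
  intro j hj
  rcases Nat.eq_zero_or_pos n with h | h
  · simp [h]
  · have hjn : (j : ℝ) ≤ n := by
      exact_mod_cast Nat.le_of_lt_succ (lt_of_lt_of_le (Finset.mem_range.1 hj) hk)
    have : (j : ℝ) / n ≤ 1 := by
      rw [div_le_one (by exact_mod_cast h)]; exact hjn
    linarith

lemma chi_le_one {n k : ℕ} (hk : k ≤ n + 1) : chi n k ≤ 1 := by
  apply Finset.prod_le_one
  · intro j hj
    rcases Nat.eq_zero_or_pos n with h | h
    · simp [h]
    · have hjn : (j : ℝ) ≤ n := by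
        exact_mod_cast Nat.le_of_lt_succ (lt_of_lt_of_le (Finset.mem_range.1 hj) hk)
      have : (j : ℝ) / n ≤ 1 := by
        rw [div_le_one (by exact_mod_cast h)]; exact hjn
      linarith
  · intro j hj
    have : (0:ℝ) ≤ (j:ℝ)/n := by positivity
    linarith

lemma chi_key (n : ℕ) (hn : 1 ≤ n) (m : ℕ) :
    2 * ∑ k ∈ Finset.range (m + 1), chi n k * (-1:ℝ) ^ k
      = 1 + (-1:ℝ) ^ m * chi n m
        + (1 / (n:ℝ)) * ∑ k ∈ Finset.range m, (-1:ℝ) ^ k * ((k:ℝ) * chi n k) := by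
  have hn0 : (n:ℝ) ≠ 0 := by positivity
  induction m with
  | zero => simp [chi_zero]; norm_num
  | succ m ih =>
      rw [Finset.sum_range_succ, Finset.sum_range_succ ((fun k => (-1:ℝ) ^ k * ((k:ℝ) * chi n k))),
        mul_add, ih, chi_succ]
      field_simp
      ring

lemma chi_succ_le {n k : ℕ} (hk : k ≤ n) : chi n (k + 1) ≤ 1 - (k:ℝ) / n := by
  rw [chi_succ]
  have h1 : chi n k ≤ 1 := chi_le_one (le_trans hk (Nat.le_succ n))
  have h0 : 0 ≤ chi n k := chi_nonneg (le_trans hk (Nat.le_succ n))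
  have hf : 0 ≤ 1 - (k:ℝ)/n := by
    rcases Nat.eq_zero_or_pos n with h | h
    · simp [h]
    · have : (k:ℝ)/n ≤ 1 := by
        rw [div_le_one (by exact_mod_cast h)]; exact_mod_cast hk
      linarith
  nlinarith

lemma chi_tel (n m : ℕ) :
    ∑ k ∈ Finset.range m, ((k:ℝ) + 1) * (chi n k - chi n (k + 1))
      = ∑ k ∈ Finset.range m, chi n k - m * chi n m := by
  induction m with
  | zero => simp
  | succ m ih =>
      rw [Finset.sum_range_succ, ih, Finset.sum_range_succ]
      push_cast
      ring

lemma geo_bound (r : ℝ) (h0 : 0 ≤ r) (h1 : r < 1) (N : ℕ) :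
    ∑ k ∈ Finset.range N, r ^ k ≤ (1 - r)⁻¹ := by
  rw [geom_sum_eq (ne_of_lt h1), div_le_iff_of_neg (by linarith : r - 1 < 0)]
  have h2 : (1 - r)⁻¹ * (r - 1) = -1 := by
    have : (1:ℝ) - r ≠ 0 := by linarith
    field_simp
    ring
  rw [h2]
  have := pow_nonneg h0 N
  linarith

lemma alt_bound (m : ℕ) : |∑ j ∈ Finset.range m, (-1:ℝ) ^ j| ≤ 1 := by
  rw [neg_one_geom_sum]
  split_ifs <;> norm_num

lemma chi_sum_le (n : ℕ) (hn : 9 ≤ n) :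
    ∑ k ∈ Finset.range (n + 1), chi n k ≤ 3 * Real.sqrt n + 2 := by
  set m : ℕ := Nat.sqrt n + 1 with hm
  have hs3 : 3 ≤ Nat.sqrt n := by rw [Nat.le_sqrt]; omega
  have hsq : Nat.sqrt n * Nat.sqrt n ≤ n := Nat.sqrt_le n
  have h2m : 2 * m ≤ n := by nlinarith
  have hnpos : (0:ℝ) < n := by positivity
  have hmpos : (0:ℝ) < m := by positivity
  have hms : Real.sqrt n < m := by
    have h' : (n:ℝ) < (m:ℝ) * (m:ℝ) := by exact_mod_cast Nat.lt_succ_sqrt n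
    nlinarith [Real.sq_sqrt (le_of_lt hnpos), Real.sqrt_nonneg (n:ℝ)]
  have hsm : ((Nat.sqrt n : ℕ):ℝ) ≤ Real.sqrt n := by
    have h1 : ((Nat.sqrt n * Nat.sqrt n : ℕ):ℝ) ≤ (n:ℝ) := by exact_mod_cast hsq
    have h2 := Real.sqrt_le_sqrt h1
    rwa [show ((Nat.sqrt n * Nat.sqrt n : ℕ):ℝ) = (Nat.sqrt n : ℝ) * (Nat.sqrt n : ℝ) by
      push_cast; ring, Real.sqrt_mul_self (by positivity)] at h2
  set r : ℝ := 1 - 2 * m / n with hr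
  have hr0 : 0 ≤ r := by
    rw [hr, sub_nonneg, div_le_one hnpos]; exact_mod_cast h2m
  have hr1 : r < 1 := by
    have : (0:ℝ) < 2 * m / n := by positivity
    rw [hr]; linarith
  have hchain : ∀ i : ℕ, 2 * m + i ≤ n → chi n (2 * m + i) ≤ r ^ i := by
    intro i
    induction i with
    | zero => intro _; simpa using chi_le_one (k := 2 * m) (by omega)
    | succ i ih =>
        intro hle
        have hle' : 2 * m + i ≤ n := by omega
        rw [show 2 * m + (i+1) = (2*m+i) + 1 from rfl, chi_succ, pow_succ]
        have hf0 : 0 ≤ 1 - ((2*m+i : ℕ):ℝ)/n := by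
          rw [sub_nonneg, div_le_one hnpos]; exact_mod_cast hle'
        have hfr : 1 - ((2*m+i : ℕ):ℝ)/n ≤ r := by
          rw [hr]
          gcongr
          push_cast; linarith [Nat.cast_nonneg (α := ℝ) i]
        exact mul_le_mul (ih hle') hfr hf0 (pow_nonneg hr0 i)
  -- split the sum
  have hsplit : (n + 1) = 2 * m + (n + 1 - 2 * m) := by omega
  rw [hsplit, Finset.sum_range_add]
  have hA : ∑ i ∈ Finset.range (2 * m), chi n i ≤ 2 * m := by
    calc ∑ i ∈ Finset.range (2 * m), chi n i ≤ ∑ i ∈ Finset.range (2 * m), 1 := by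
          apply Finset.sum_le_sum
          intro i hi
          exact chi_le_one (by have := Finset.mem_range.1 hi; omega)
      _ = 2 * m := by simp
  have hB : ∑ i ∈ Finset.range (n + 1 - 2 * m), chi n (2 * m + i)
      ≤ (1 - r)⁻¹ := by
    calc ∑ i ∈ Finset.range (n + 1 - 2 * m), chi n (2 * m + i)
        ≤ ∑ i ∈ Finset.range (n + 1 - 2 * m), r ^ i := by
          apply Finset.sum_le_sum
          intro i hi
          exact hchain i (by have := Finset.mem_range.1 hi; omega)
      _ ≤ (1 - r)⁻¹ := geo_bound r hr0 hr1 _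
  have hinv : (1 - r)⁻¹ = n / (2 * m) := by
    rw [hr]
    have : (1:ℝ) - (1 - 2 * m / n) = 2 * m / n := by ring
    rw [this, inv_div]
  have hBval : (1 - r)⁻¹ ≤ Real.sqrt n / 2 := by
    rw [hinv]
    have h1 : (n:ℝ) / (2 * m) ≤ (n:ℝ) / (2 * Real.sqrt n) := by
      apply div_le_div_of_nonneg_left (le_of_lt hnpos) (by positivity)
      linarith
    have h2 : (n:ℝ) / (2 * Real.sqrt n) = Real.sqrt n / 2 := by
      rw [eq_div_iff (by norm_num : (2:ℝ) ≠ 0)]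
      field_simp
      nlinarith [Real.sq_sqrt (le_of_lt hnpos)]
    linarith
  have hm_le : (m:ℝ) ≤ Real.sqrt n + 1 := by
    have : (m:ℝ) = (Nat.sqrt n : ℝ) + 1 := by push_cast [hm]; ring
    linarith
  have hs1 : (1:ℝ) ≤ Real.sqrt n := by
    have : ((3:ℕ):ℝ) ≤ Real.sqrt n := le_trans (by exact_mod_cast hs3) hsm
    push_cast at this; linarith
  calc ∑ i ∈ Finset.range (2 * m), chi n i
        + ∑ i ∈ Finset.range (n + 1 - 2 * m), chi n (2 * m + i)
      ≤ 2 * m + Real.sqrt n / 2 := by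
        have := le_trans hB hBval
        push_cast
        push_cast at hA
        linarith
    _ ≤ 3 * Real.sqrt n + 2 := by
        push_cast at hm_le ⊢
        nlinarith

lemma chi_last_le (n : ℕ) (hn : 1 ≤ n) : chi n n ≤ 1 / n := by
  have h := chi_succ_le (n := n) (k := n - 1) (by omega)
  rw [show n - 1 + 1 = n by omega] at h
  have hc : ((n - 1 : ℕ):ℝ) = (n:ℝ) - 1 := by
    push_cast [Nat.cast_sub hn]; ring
  rw [hc] at h
  have hn0 : (n:ℝ) ≠ 0 := by positivity
  have : 1 - ((n:ℝ) - 1)/n = 1/n := by field_simp; ring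
  linarith [this ▸ h]

lemma chi_pred_le (n : ℕ) (hn : 2 ≤ n) : chi n (n - 1) ≤ 2 / n := by
  have h := chi_succ_le (n := n) (k := n - 2) (by omega)
  rw [show n - 2 + 1 = n - 1 by omega] at h
  have hc : ((n - 2 : ℕ):ℝ) = (n:ℝ) - 2 := by
    push_cast [Nat.cast_sub hn]; ring
  rw [hc] at h
  have hn0 : (n:ℝ) ≠ 0 := by positivity
  have : 1 - ((n:ℝ) - 2)/n = 2/n := by field_simp; ring
  linarith [this ▸ h]

lemma E_bound (n : ℕ) (hn : 9 ≤ n) :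
    |∑ k ∈ Finset.range n, (-1:ℝ) ^ k * ((k:ℝ) * chi n k)| ≤ 6 * Real.sqrt n + 6 := by
  have hnpos : (0:ℝ) < n := by positivity
  have hbp := Finset.sum_range_by_parts (f := fun k => (k:ℝ) * chi n k)
    (g := fun k => (-1:ℝ) ^ k) n
  simp only [smul_eq_mul] at hbp
  have hE : ∑ k ∈ Finset.range n, (-1:ℝ) ^ k * ((k:ℝ) * chi n k)
      = ∑ k ∈ Finset.range n, ((k:ℝ) * chi n k) * (-1:ℝ) ^ k := by
    apply Finset.sum_congr rfl; intros; ring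
  rw [hE, hbp]
  -- bound first term
  have h1 : |((n - 1 : ℕ):ℝ) * chi n (n - 1) * ∑ i ∈ Finset.range n, (-1:ℝ) ^ i| ≤ 2 := by
    rw [abs_mul]
    have hpred := chi_pred_le n (by omega)
    have hprednn : 0 ≤ chi n (n - 1) := chi_nonneg (by omega)
    have hcast : ((n - 1 : ℕ):ℝ) ≤ (n:ℝ) := by
      exact_mod_cast Nat.sub_le n 1
    have hcnn : (0:ℝ) ≤ ((n - 1 : ℕ):ℝ) := Nat.cast_nonneg _
    have : |((n - 1 : ℕ):ℝ) * chi n (n - 1)| ≤ 2 := by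
      rw [abs_of_nonneg (by positivity)]
      calc ((n - 1 : ℕ):ℝ) * chi n (n - 1) ≤ (n:ℝ) * (2 / n) := by
            apply mul_le_mul hcast hpred hprednn (le_of_lt hnpos)
        _ = 2 := by field_simp
    calc |((n - 1 : ℕ):ℝ) * chi n (n - 1)| * |∑ i ∈ Finset.range n, (-1:ℝ) ^ i|
        ≤ 2 * 1 := mul_le_mul this (alt_bound n) (abs_nonneg _) (by norm_num)
      _ = 2 := by norm_num
  -- bound the second sum
  have h2 : |∑ i ∈ Finset.range (n - 1),
      (((i + 1 : ℕ):ℝ) * chi n (i + 1) - (i:ℝ) * chi n i) * ∑ j ∈ Finset.range (i + 1), (-1:ℝ) ^ j|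
      ≤ 2 * (3 * Real.sqrt n + 2) := by
    calc |∑ i ∈ Finset.range (n - 1),
        (((i + 1 : ℕ):ℝ) * chi n (i + 1) - (i:ℝ) * chi n i) * ∑ j ∈ Finset.range (i + 1), (-1:ℝ) ^ j|
        ≤ ∑ i ∈ Finset.range (n - 1),
          |(((i + 1 : ℕ):ℝ) * chi n (i + 1) - (i:ℝ) * chi n i) * ∑ j ∈ Finset.range (i + 1), (-1:ℝ) ^ j| :=
          Finset.abs_sum_le_sum_abs _ _
      _ ≤ ∑ i ∈ Finset.range (n - 1), (chi n i + ((i:ℝ) + 1) * (chi n i - chi n (i + 1))) := by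
          apply Finset.sum_le_sum
          intro i hi
          have hin : i + 1 ≤ n := by have := Finset.mem_range.1 hi; omega
          have hcnn : 0 ≤ chi n i := chi_nonneg (by omega)
          have hdiff : ((i + 1 : ℕ):ℝ) * chi n (i + 1) - (i:ℝ) * chi n i
              = chi n i * (1 - (i:ℝ) * ((i:ℝ) + 1) / n) := by
            rw [chi_succ]; push_cast; field_simp; ring
          have htel : ((i:ℝ) + 1) * (chi n i - chi n (i + 1)) = chi n i * ((i:ℝ) * ((i:ℝ) + 1) / n) := by
            rw [chi_succ]; field_simp; ring
          rw [abs_mul, hdiff, htel, abs_mul]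
          have hinn : (0:ℝ) ≤ (i:ℝ) * ((i:ℝ) + 1) / n := by positivity
          have habs : |1 - (i:ℝ) * ((i:ℝ) + 1) / n| ≤ 1 + (i:ℝ) * ((i:ℝ) + 1) / n := by
            rw [abs_le]; constructor <;> linarith
          calc |chi n i| * |1 - (i:ℝ) * ((i:ℝ) + 1) / n| * |∑ j ∈ Finset.range (i + 1), (-1:ℝ) ^ j|
              ≤ |chi n i| * |1 - (i:ℝ) * ((i:ℝ) + 1) / n| * 1 := by
                apply mul_le_mul_of_nonneg_left (alt_bound _) (by positivity)
            _ = |chi n i| * |1 - (i:ℝ) * ((i:ℝ) + 1) / n| := by ring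
            _ ≤ chi n i * (1 + (i:ℝ) * ((i:ℝ) + 1) / n) := by
                rw [abs_of_nonneg hcnn]
                exact mul_le_mul_of_nonneg_left habs hcnn
            _ = chi n i + chi n i * ((i:ℝ) * ((i:ℝ) + 1) / n) := by ring
      _ = ∑ i ∈ Finset.range (n - 1), chi n i
            + (∑ i ∈ Finset.range (n - 1), chi n i - ((n - 1 : ℕ):ℝ) * chi n (n - 1)) := by
          rw [Finset.sum_add_distrib, chi_tel]
      _ ≤ 2 * ∑ i ∈ Finset.range (n + 1), chi n i := by
          have hsub : ∑ i ∈ Finset.range (n - 1), chi n i ≤ ∑ i ∈ Finset.range (n + 1), chi n i := by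
            apply Finset.sum_le_sum_of_subset_of_nonneg
            · exact Finset.range_subset_range.2 (by omega)
            · intro i hi _
              exact chi_nonneg (by have := Finset.mem_range.1 hi; omega)
          have hnn : (0:ℝ) ≤ ((n - 1 : ℕ):ℝ) * chi n (n - 1) := by
            have := chi_nonneg (n := n) (k := n - 1) (by omega)
            positivity
          linarith
      _ ≤ 2 * (3 * Real.sqrt n + 2) := by
          have := chi_sum_le n hn
          linarith
  calc |((n - 1 : ℕ):ℝ) * chi n (n - 1) * ∑ i ∈ Finset.range n, (-1:ℝ) ^ i
        - ∑ i ∈ Finset.range (n - 1),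
          (((i + 1 : ℕ):ℝ) * chi n (i + 1) - (i:ℝ) * chi n i) * ∑ j ∈ Finset.range (i + 1), (-1:ℝ) ^ j|
      ≤ 2 + 2 * (3 * Real.sqrt n + 2) := by
        refine le_trans (abs_sub _ _) ?_
        exact add_le_add h1 h2
    _ = 6 * Real.sqrt n + 6 := by ring

lemma sqrt_nat_tendsto : Filter.Tendsto (fun n : ℕ => Real.sqrt n) Filter.atTop Filter.atTop := by
  rw [Filter.tendsto_atTop]
  intro b
  rw [Filter.eventually_atTop]
  refine ⟨⌈b ^ 2⌉₊, fun n hn => ?_⟩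
  apply Real.le_sqrt_of_sq_le
  calc b ^ 2 ≤ (⌈b ^ 2⌉₊ : ℝ) := Nat.le_ceil _
    _ ≤ n := by exact_mod_cast hn

lemma aux_tendsto : Filter.Tendsto (fun n : ℕ => (4 * Real.sqrt n + 4) / n)
    Filter.atTop (nhds 0) := by
  have e1 : Filter.Tendsto (fun n : ℕ => (4:ℝ) / Real.sqrt n) Filter.atTop (nhds 0) :=
    tendsto_const_nhds.div_atTop sqrt_nat_tendsto
  have e2 := tendsto_const_div_atTop_nhds_zero_nat (4:ℝ)
  have e3 := e1.add e2
  rw [add_zero] at e3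
  apply e3.congr'
  rw [Filter.EventuallyEq, Filter.eventually_atTop]
  refine ⟨1, fun n hn => ?_⟩
  have hnpos : (0:ℝ) < n := by exact_mod_cast hn
  have hs : (0:ℝ) < Real.sqrt n := Real.sqrt_pos.2 hnpos
  have hss : Real.sqrt n * Real.sqrt n = (n:ℝ) := Real.mul_self_sqrt (le_of_lt hnpos)
  field_simp
  nlinarith

/-- The Grandi series is χ-summable to 1/2. -/
theorem chi_grandi :
    Filter.Tendsto (fun n : ℕ => ∑ k ∈ Finset.range (n + 1), chi n k * (-1 : ℝ) ^ k)
      Filter.atTop (nhds (1 / 2)) := by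
  rw [← tendsto_sub_nhds_zero_iff]
  apply squeeze_zero_norm' (a := fun n : ℕ => (4 * Real.sqrt n + 4) / n) _ aux_tendsto
  rw [Filter.eventually_atTop]
  refine ⟨9, fun n hn => ?_⟩
  have hnpos : (0:ℝ) < n := by positivity
  have hkey := chi_key n (by omega) n
  set S := ∑ k ∈ Finset.range (n + 1), chi n k * (-1 : ℝ) ^ k with hS
  set E := ∑ k ∈ Finset.range n, (-1:ℝ) ^ k * ((k:ℝ) * chi n k) with hEdef
  have hEb : |E| ≤ 6 * Real.sqrt n + 6 := E_bound n hn
  have hXb : |(-1:ℝ) ^ n * chi n n| ≤ 1 / n := by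
    rw [abs_mul, abs_pow, abs_neg, abs_one, one_pow, one_mul,
      abs_of_nonneg (chi_nonneg (Nat.le_succ n))]
    exact chi_last_le n (by omega)
  have hdiff : S - 1/2 = ((-1:ℝ) ^ n * chi n n) / 2 + E / (2 * n) := by
    have hn0 : (n:ℝ) ≠ 0 := ne_of_gt hnpos
    field_simp at hkey ⊢
    linarith
  rw [Real.norm_eq_abs, hdiff]
  have hs0 : (0:ℝ) ≤ Real.sqrt n := Real.sqrt_nonneg _
  calc |((-1:ℝ) ^ n * chi n n) / 2 + E / (2 * n)|
      ≤ |((-1:ℝ) ^ n * chi n n) / 2| + |E / (2 * n)| := abs_add_le _ _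
    _ = |(-1:ℝ) ^ n * chi n n| / 2 + |E| / (2 * n) := by
        rw [abs_div, abs_div, abs_of_nonneg (by norm_num : (0:ℝ) ≤ 2),
          abs_of_nonneg (by positivity : (0:ℝ) ≤ 2 * n)]
    _ ≤ (1/n) / 2 + (6 * Real.sqrt n + 6) / (2 * n) := by
        gcongr
    _ ≤ (4 * Real.sqrt n + 4) / n := by
        have h1 : 1/(n:ℝ)/2 + (6 * Real.sqrt n + 6) / (2 * n)
            = (6 * Real.sqrt n + 7) / (2 * n) := by
          field_simp
          ring
        rw [h1, div_le_div_iff₀ (by positivity) hnpos]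
        nlinarith
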